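/- Suppose ρ is strongly convex with modulus C > 0 (i.e. ψ'(x) ≥ C for all x), and suppose λ_min(Σ̂) > 0 where Σ̂ = (1/n) Σᵢ Xᵢ Xᵢᵀ. Let β̂ be the unpenalized M-estimator, satisfying Σᵢ Xᵢ ψ(εᵢ − Xᵢᵀβ̂) = 0, and let β̂_τ be the ridge-penalized M-estimator, the minimizer of (1/n) Σᵢ ρ(εᵢ − Xᵢᵀβ) + (τ/2)‖β‖² for τ > 0. Then ‖β̂_τ − β̂‖ ≤ (τ/(C·λ_min(Σ̂) + τ))·‖β̂‖, ‖β̂_τ − β̂‖ ≤ (τ/(C·λ_min(Σ̂)))·‖β̂_τ‖, and consequently ‖β̂_τ − β̂‖ ≤ (√(2τ)/(C·λ_min(Σ̂)))·√((1/n) Σᵢ ρ(εᵢ)). -/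

import Mathlib

noncomputable section

open scoped BigOperators RealInnerProductSpace

/-- Residual `ε j - Xⱼᵀβ`. -/
def resid {p n : ℕ} (X : Fin n → EuclideanSpace ℝ (Fin p)) (ε : Fin n → ℝ)
    (β : EuclideanSpace ℝ (Fin p)) (j : Fin n) : ℝ :=
  ε j - ∑ k, X j k * β k

/-- The ridge-regularized objective `F(β) = (1/n) Σᵢ ρ(εᵢ - Xᵢᵀβ) + (τ/2)‖β‖²`. -/
def Fobj {p n : ℕ} (ρ : ℝ → ℝ) (τ : ℝ) (X : Fin n → EuclideanSpace ℝ (Fin p))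
    (ε : Fin n → ℝ) (β : EuclideanSpace ℝ (Fin p)) : ℝ :=
  (1 / (n : ℝ)) * ∑ i, ρ (ε i - ∑ k, X i k * β k) + (τ / 2) * ‖β‖ ^ 2

/-- The sample covariance matrix `Σ̂ = (1/n) Σᵢ Xᵢ Xᵢᵀ`. -/
def sigmaHat {p n : ℕ} (X : Fin n → EuclideanSpace ℝ (Fin p)) :
    Matrix (Fin p) (Fin p) ℝ :=
  (1 / (n : ℝ)) • ∑ i, Matrix.vecMulVec (fun k => X i k) (fun k => X i k)

lemma quad_lower {p : ℕ} (A : Matrix (Fin p) (Fin p) ℝ) (hA : A.IsHermitian)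
    (x : EuclideanSpace ℝ (Fin p)) :
    (⨅ j, hA.eigenvalues j) * ‖x‖ ^ 2 ≤ ∑ k, x k * ∑ l, A k l * x l := by
  set L := Matrix.toEuclideanLin A with hL
  have hLsym : L.IsSymmetric := Matrix.isHermitian_iff_isSymmetric.1 hA
  set b := hA.eigenvectorBasis with hb
  have hLb : ∀ j, L (b j) = hA.eigenvalues j • b j := by
    intro j
    ext k
    exact congrFun (hA.mulVec_eigenvectorBasis j) k
  have h1 : ⟪x, L x⟫ = ∑ j, hA.eigenvalues j * (⟪b j, x⟫)^2 := by
    rw [← b.sum_inner_mul_inner x (L x)]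
    refine Finset.sum_congr rfl fun j _ => ?_
    rw [← hLsym (b j) x, hLb j, inner_smul_left, real_inner_comm x (b j)]
    simp only [starRingEnd_apply, star_trivial]
    ring
  have h2 : ‖x‖^2 = ∑ j, (⟪b j, x⟫)^2 := by
    rw [← real_inner_self_eq_norm_sq, ← b.sum_inner_mul_inner x x]
    refine Finset.sum_congr rfl fun j _ => ?_
    rw [real_inner_comm x (b j)]; ring
  have h3 : ⟪x, L x⟫ = ∑ k, x k * ∑ l, A k l * x l := by
    simp [hL, Matrix.toEuclideanLin_apply, PiLp.inner_apply, Matrix.mulVec, dotProduct,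
      RCLike.inner_apply, conj_trivial]
    exact Finset.sum_congr rfl fun _ _ => mul_comm _ _
  rw [← h3, h1, h2, Finset.mul_sum]
  refine Finset.sum_le_sum fun j _ => ?_
  exact mul_le_mul_of_nonneg_right (ciInf_le (Set.Finite.bddBelow (Set.finite_range _)) j) (sq_nonneg _)

lemma quad_eq {p n : ℕ} (X : Fin n → EuclideanSpace ℝ (Fin p)) (x : EuclideanSpace ℝ (Fin p)) :
    ∑ k, x k * ∑ l, sigmaHat X k l * x l = (1/(n:ℝ)) * ∑ i, (∑ k, X i k * x k)^2 := by
  simp only [sigmaHat, Matrix.smul_apply, Matrix.sum_apply, Matrix.vecMulVec_apply, smul_eq_mul]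
  have step : ∀ k, x k * ∑ l, ((1/(n:ℝ)) * ∑ i, X i k * X i l) * x l
      = ∑ i, (1/(n:ℝ)) * ((X i k * x k) * ∑ l, X i l * x l) := by
    intro k
    calc x k * ∑ l, ((1/(n:ℝ)) * ∑ i, X i k * X i l) * x l
        = ∑ l, ∑ i, (1/(n:ℝ)) * ((X i k * x k) * (X i l * x l)) := by
          rw [Finset.mul_sum]
          refine Finset.sum_congr rfl fun l _ => ?_
          rw [Finset.mul_sum, Finset.sum_mul, Finset.mul_sum]
          refine Finset.sum_congr rfl fun i _ => ?_
          ring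
      _ = ∑ i, ∑ l, (1/(n:ℝ)) * ((X i k * x k) * (X i l * x l)) := Finset.sum_comm
      _ = ∑ i, (1/(n:ℝ)) * ((X i k * x k) * ∑ l, X i l * x l) := by
          refine Finset.sum_congr rfl fun i _ => ?_
          rw [Finset.mul_sum, Finset.mul_sum]
  calc ∑ k, x k * ∑ l, ((1/(n:ℝ)) * ∑ i, X i k * X i l) * x l
      = ∑ k, ∑ i, (1/(n:ℝ)) * ((X i k * x k) * ∑ l, X i l * x l) :=
        Finset.sum_congr rfl fun k _ => step k
    _ = ∑ i, ∑ k, (1/(n:ℝ)) * ((X i k * x k) * ∑ l, X i l * x l) := Finset.sum_comm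
    _ = (1/(n:ℝ)) * ∑ i, (∑ k, X i k * x k)^2 := by
        rw [Finset.mul_sum]
        refine Finset.sum_congr rfl fun i _ => ?_
        rw [sq]
        simp only [Finset.mul_sum, Finset.sum_mul]
        rw [Finset.sum_comm]

lemma psi_mono {ρ : ℝ → ℝ} {C : ℝ} (hρsmooth : ContDiff ℝ 2 ρ)
    (hstrong : ∀ x : ℝ, C ≤ deriv (deriv ρ) x) (a b : ℝ) :
    C * (a - b)^2 ≤ (deriv ρ a - deriv ρ b) * (a - b) := by
  have h2 : ContDiff ℝ ((1:WithTop ℕ∞)+1) ρ := by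
    have : ((1:WithTop ℕ∞)+1) = (2:ℕ) := by norm_num
    rw [this]; exact_mod_cast hρsmooth
  have hψ : Differentiable ℝ (deriv ρ) :=
    (contDiff_succ_iff_deriv.mp h2).2.2.differentiable one_ne_zero
  have key : ∀ u v : ℝ, v ≤ u → C * (u - v) ≤ deriv ρ u - deriv ρ v := by
    intro u v huv
    have hg : Monotone (fun x => deriv ρ x - C * x) := by
      apply monotone_of_deriv_nonneg
      · exact hψ.sub (differentiable_id.const_mul C)
      · intro x
        have hd : HasDerivAt (fun x => deriv ρ x - C * x) (deriv (deriv ρ) x - C * 1) x :=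
          ((hψ x).hasDerivAt).sub ((hasDerivAt_id x).const_mul C)
        rw [hd.deriv]
        linarith [hstrong x]
    have := hg huv
    simp only at this
    linarith
  rcases le_total b a with h | h
  · nlinarith [key a b h]
  · nlinarith [key b a h]

set_option maxHeartbeats 1000000 in
theorem statement18 {p n : ℕ} (ρ : ℝ → ℝ) (τ C : ℝ) (hτ : 0 < τ) (hC : 0 < C)
    (hρconv : ConvexOn ℝ Set.univ ρ) (hρsmooth : ContDiff ℝ 2 ρ)
    (hρnonneg : ∀ x, 0 ≤ ρ x) (hρzero : ρ 0 = 0)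
    -- ρ strongly convex with modulus C: ψ'(x) ≥ C for all x
    (hstrong : ∀ x : ℝ, C ≤ deriv (deriv ρ) x)
    (X : Fin n → EuclideanSpace ℝ (Fin p)) (ε : Fin n → ℝ)
    (hher : (sigmaHat X).IsHermitian)
    -- λ_min(Σ̂) > 0
    (hlmin : 0 < ⨅ j, hher.eigenvalues j)
    -- β̂ : the unpenalized M-estimator, Σᵢ Xᵢ ψ(εᵢ - Xᵢᵀβ̂) = 0
    (βhat : EuclideanSpace ℝ (Fin p))
    (hβhat : ∑ i, deriv ρ (resid X ε βhat i) • X i = (0 : EuclideanSpace ℝ (Fin p)))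
    -- β̂_τ : the ridge-penalized M-estimator (minimizer of the penalized objective)
    (βτ : EuclideanSpace ℝ (Fin p))
    (hβτ : ∀ β, Fobj ρ τ X ε βτ ≤ Fobj ρ τ X ε β) :
    ‖βτ - βhat‖ ≤ (τ / (C * (⨅ j, hher.eigenvalues j) + τ)) * ‖βhat‖ ∧
    ‖βτ - βhat‖ ≤ (τ / (C * (⨅ j, hher.eigenvalues j))) * ‖βτ‖ ∧
    ‖βτ - βhat‖ ≤ (Real.sqrt (2 * τ) / (C * (⨅ j, hher.eigenvalues j))) *
      Real.sqrt ((1 / (n : ℝ)) * ∑ i, ρ (ε i)) := by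
  have hρdiff : Differentiable ℝ ρ := hρsmooth.differentiable (by norm_num)
  set lam := ⨅ j, hher.eigenvalues j with hlamdef
  set D : EuclideanSpace ℝ (Fin p) := βτ - βhat with hDdef
  set a : Fin n → ℝ := fun i => ∑ k, X i k * D k with hadef
  set r : Fin n → ℝ := fun i => ε i - ∑ k, X i k * βτ k with hrdef
  set s : Fin n → ℝ := fun i => ε i - ∑ k, X i k * βhat k with hsdef
  set ip : ℝ := ⟪βτ, D⟫ with hipdef
  -- quadratic form lower bound
  have hquad : lam * ‖D‖^2 ≤ (1/(n:ℝ)) * ∑ i, (a i)^2 := by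
    have h1 := quad_lower (sigmaHat X) hher D
    rw [quad_eq X D] at h1
    exact h1
  -- stationarity at βτ
  have hstat : τ * ip = (1/(n:ℝ)) * ∑ i, deriv ρ (r i) * a i := by
    set φ : ℝ → ℝ := fun t =>
      (1/(n:ℝ)) * ∑ i, ρ (r i - t * a i)
        + (τ/2) * (‖βτ‖^2 + 2*t*ip + t^2*‖D‖^2) with hφdef
    have hφeq : ∀ t, φ t = Fobj ρ τ X ε (βτ + t • D) := by
      intro t
      rw [hφdef]
      simp only [Fobj]
      congr 1
      · congr 1
        refine Finset.sum_congr rfl fun i _ => ?_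
        congr 1
        have hsum : ∑ k, X i k * (βτ + t • D) k
            = (∑ k, X i k * βτ k) + t * ∑ k, X i k * D k := by
          rw [Finset.mul_sum, ← Finset.sum_add_distrib]
          refine Finset.sum_congr rfl fun k _ => ?_
          have hk : (βτ + t • D) k = βτ k + t * D k := rfl
          rw [hk]; ring
        rw [hsum, hrdef, hadef]
        ring
      · have hn : ‖βτ + t • D‖^2 = ‖βτ‖^2 + 2*t*ip + t^2*‖D‖^2 := by
          rw [norm_add_sq_real, real_inner_smul_right, norm_smul]
          simp only [Real.norm_eq_abs, mul_pow, sq_abs]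
          rw [hipdef]
          ring
        rw [hn]
    have hmin : IsLocalMin φ 0 := by
      apply Filter.Eventually.of_forall
      intro t
      rw [hφeq t, hφeq 0]
      have h00 : βτ + (0:ℝ) • D = βτ := by simp
      rw [h00]
      exact hβτ _
    have hderS : HasDerivAt (fun t => ∑ i, ρ (r i - t * a i))
        (∑ i, deriv ρ (r i) * (-(a i))) 0 := by
      apply HasDerivAt.fun_sum
      intro i _
      have hin : HasDerivAt (fun t : ℝ => r i - t * a i) (-(1 * a i)) 0 :=
        ((hasDerivAt_id (0:ℝ)).mul_const (a i)).const_sub (r i)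
      have hρ' : HasDerivAt ρ (deriv ρ (r i - 0 * a i)) (r i - 0 * a i) :=
        (hρdiff _).hasDerivAt
      have hcomp := hρ'.comp 0 hin
      simpa [Function.comp_def] using hcomp
    have hq1 : HasDerivAt (fun t : ℝ => 2*t*ip) (2*ip) 0 := by
      have hfun : (fun t : ℝ => 2*t*ip) = fun t : ℝ => t * (2*ip) := by
        funext t; ring
      rw [hfun]
      simpa using (hasDerivAt_id (0:ℝ)).mul_const (2*ip)
    have hq2 : HasDerivAt (fun t : ℝ => t^2*‖D‖^2) 0 0 := by
      have := (hasDerivAt_pow 2 (0:ℝ)).mul_const (‖D‖^2)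
      simpa using this
    have hφd : HasDerivAt φ
        ((1/(n:ℝ)) * ∑ i, deriv ρ (r i) * (-(a i)) + (τ/2) * (2*ip + 0)) 0 := by
      rw [hφdef]
      exact (hderS.const_mul (1/(n:ℝ))).add
        (((hq1.const_add (‖βτ‖^2)).add hq2).const_mul (τ/2))
    have h0 : deriv φ 0 = 0 := hmin.deriv_eq_zero
    have hE : (1/(n:ℝ)) * ∑ i, deriv ρ (r i) * (-(a i)) + (τ/2)*(2*ip+0) = 0 := by
      rw [← hφd.deriv]; exact h0
    have hneg : ∑ i, deriv ρ (r i) * (-(a i)) = -∑ i, deriv ρ (r i) * a i := by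
      rw [← Finset.sum_neg_distrib]
      exact Finset.sum_congr rfl fun i _ => by ring
    rw [hneg] at hE
    have hE2 : -((1/(n:ℝ)) * ∑ i, deriv ρ (r i) * a i) + τ * ip = 0 := by
      rw [mul_neg] at hE; linarith
    linarith
  -- first-order condition at βhat, paired with D
  have hsum0 : ∑ i, deriv ρ (s i) * a i = 0 := by
    have h := congrArg (fun w : EuclideanSpace ℝ (Fin p) => (⟪w, D⟫ : ℝ)) hβhat
    simp only [sum_inner, real_inner_smul_left, inner_zero_left] at h
    have hXD : ∀ i : Fin n, (⟪X i, D⟫ : ℝ) = a i := by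
      intro i
      simp [hadef, PiLp.inner_apply, RCLike.inner_apply, conj_trivial]
      exact Finset.sum_congr rfl fun _ _ => mul_comm _ _
    simp only [hXD, resid] at h
    simpa only [hsdef] using h
  -- monotonicity bound
  have hkey : τ * ip ≤ -(C * ((1/(n:ℝ)) * ∑ i, (a i)^2)) := by
    rw [hstat]
    have hterm : ∀ i ∈ Finset.univ, deriv ρ (r i) * a i ≤ deriv ρ (s i) * a i - C * (a i)^2 := by
      intro i _
      have hm := psi_mono hρsmooth hstrong (r i) (s i)
      have hrs : r i - s i = -(a i) := by
        simp only [hrdef, hsdef, hadef]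
        have : ∑ k, X i k * D k = (∑ k, X i k * βτ k) - ∑ k, X i k * βhat k := by
          rw [← Finset.sum_sub_distrib]
          refine Finset.sum_congr rfl fun k _ => ?_
          have : D k = βτ k - βhat k := rfl
          rw [this]; ring
        rw [this]; ring
      rw [hrs] at hm
      nlinarith [hm]
    have hmono := Finset.sum_le_sum hterm
    have hn : (0:ℝ) ≤ 1/(n:ℝ) := by positivity
    calc (1/(n:ℝ)) * ∑ i, deriv ρ (r i) * a i
        ≤ (1/(n:ℝ)) * ∑ i, (deriv ρ (s i) * a i - C * (a i)^2) :=
          mul_le_mul_of_nonneg_left hmono hn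
      _ = -(C * ((1/(n:ℝ)) * ∑ i, (a i)^2)) := by
          rw [Finset.sum_sub_distrib, hsum0, ← Finset.mul_sum]
          ring
  have hClam : 0 < C * lam := mul_pos hC hlmin
  have hmain : C * lam * ‖D‖^2 ≤ -(τ * ip) := by
    have := mul_le_mul_of_nonneg_left hquad hC.le
    linarith
  have hip2 : ip = ⟪βhat, D⟫ + ‖D‖^2 := by
    have hb : βτ = βhat + D := by rw [hDdef]; abel
    rw [hipdef]
    nth_rewrite 1 [hb]
    rw [inner_add_left, real_inner_self_eq_norm_sq]
  have hcs1 : -⟪βhat, D⟫ ≤ ‖βhat‖ * ‖D‖ := by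
    have := abs_real_inner_le_norm βhat D
    have h := abs_le.1 this
    linarith [h.1]
  have hcs2 : -ip ≤ ‖βτ‖ * ‖D‖ := by
    have := abs_real_inner_le_norm βτ D
    have h := abs_le.1 this
    rw [hipdef]
    linarith [h.1]
  -- the three goals
  have g2 : ‖D‖ ≤ (τ / (C * lam)) * ‖βτ‖ := by
    rcases eq_or_lt_of_le (norm_nonneg D) with h0 | h0
    · rw [← h0]; positivity
    · rw [div_mul_eq_mul_div, le_div_iff₀ hClam]
      nlinarith [hmain, hcs2]
  have g1 : ‖D‖ ≤ (τ / (C * lam + τ)) * ‖βhat‖ := by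
    rcases eq_or_lt_of_le (norm_nonneg D) with h0 | h0
    · rw [← h0]; positivity
    · rw [div_mul_eq_mul_div, le_div_iff₀ (by linarith : (0:ℝ) < C * lam + τ)]
      nlinarith [hmain, hcs1, hip2]
  refine ⟨g1, g2, ?_⟩
  -- third goal
  set F0 : ℝ := (1/(n:ℝ)) * ∑ i, ρ (ε i) with hF0def
  have hF0 : 0 ≤ F0 :=
    mul_nonneg (by positivity) (Finset.sum_nonneg fun i _ => hρnonneg _)
  have hβτnorm : ‖βτ‖ ≤ Real.sqrt (2 * F0 / τ) := by
    have hmin := hβτ 0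
    have h0 : Fobj ρ τ X ε 0 = F0 := by
      simp [Fobj, hF0def]
    have hlow : (τ/2) * ‖βτ‖^2 ≤ Fobj ρ τ X ε βτ := by
      have : 0 ≤ (1/(n:ℝ)) * ∑ i, ρ (ε i - ∑ k, X i k * βτ k) :=
        mul_nonneg (by positivity) (Finset.sum_nonneg fun i _ => hρnonneg _)
      simp only [Fobj]
      linarith
    have hmin' : Fobj ρ τ X ε βτ ≤ F0 := by rw [← h0]; exact hβτ 0
    have hsq : ‖βτ‖^2 ≤ 2 * F0 / τ := by
      rw [le_div_iff₀ hτ]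
      nlinarith [hmin', hlow]
    have := Real.sqrt_le_sqrt hsq
    rwa [Real.sqrt_sq (norm_nonneg _)] at this
  have heq : (τ / (C * lam)) * Real.sqrt (2 * F0 / τ) =
      (Real.sqrt (2 * τ) / (C * lam)) * Real.sqrt F0 := by
    rw [div_mul_eq_mul_div, div_mul_eq_mul_div]
    congr 1
    have h1 : 2 * F0 / τ = 2 * τ * F0 / τ^2 := by
      field_simp
    rw [h1, Real.sqrt_div (by positivity), Real.sqrt_sq hτ.le, Real.sqrt_mul (by linarith : (0:ℝ) ≤ 2*τ)]
    field_simp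
  calc ‖D‖ ≤ (τ / (C * lam)) * ‖βτ‖ := g2
    _ ≤ (τ / (C * lam)) * Real.sqrt (2 * F0 / τ) := by
        apply mul_le_mul_of_nonneg_left hβτnorm (by positivity)
    _ = (Real.sqrt (2 * τ) / (C * lam)) * Real.sqrt F0 := heq
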